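/- If f : [n] → ℕ is ε-far from monotone and t = ⌊εn/2⌋, then there exist pairwise disjoint pairs (x_1,y_1),...,(x_t,y_t) with x_i < y_i, f(x_i) > f(y_i), and y_i − x_i ≤ εn for all i. -/

import Mathlib

open Finset

/-- From any violating pair inside `C` we can extract a violating pair that is
consecutive within `C`. -/
private lemma stmt6_consec (f : ℕ → ℕ) (C : Finset ℕ) :
    ∀ d x y, y - x ≤ d → x ∈ C → y ∈ C → x < y → f y < f x →
      ∃ a b, a ∈ C ∧ b ∈ C ∧ a < b ∧ f b < f a ∧ b ≤ y ∧
        (∀ c ∈ C, ¬(a < c ∧ c < b)) := by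
  intro d
  induction d with
  | zero => intro x y h _ _ hxy _; omega
  | succ d ih =>
    intro x y h hx hy hxy hf
    by_cases hc : ∃ c ∈ C, x < c ∧ c < y
    · obtain ⟨c, hcC, hc1, hc2⟩ := hc
      by_cases hfc : f c < f x
      · obtain ⟨a, b, h1, h2, h3, h4, h5, h6⟩ := ih x c (by omega) hx hcC hc1 hfc
        exact ⟨a, b, h1, h2, h3, h4, by omega, h6⟩
      · exact ih c y (by omega) hcC hy hc2 (by omega)
    · exact ⟨x, y, hx, hy, hxy, hf, le_rfl, fun c hcC hlt => hc ⟨c, hcC, hlt.1, hlt.2⟩⟩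

theorem stmt6 (n : ℕ) (ε : ℝ) (hε : 0 < ε) (f : ℕ → ℕ)
    (hfar : ∀ g : ℕ → ℕ, (∀ x y, x ≤ y → y < n → g x ≤ g y) →
      ε * n ≤ ((Finset.range n).filter (fun x => f x ≠ g x)).card) :
    ∃ P : Finset (ℕ × ℕ), P.card = ⌊ε * n / 2⌋₊ ∧
      (∀ p ∈ P, p.1 < p.2 ∧ p.2 < n ∧ f p.2 < f p.1 ∧ ((p.2 : ℝ) - p.1) ≤ ε * n) ∧
      (∀ p ∈ P, ∀ q ∈ P, p ≠ q → ({p.1, p.2} : Set ℕ) ∩ {q.1, q.2} = ∅) := by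
  classical
  set t : ℕ := ⌊ε * n / 2⌋₊ with ht
  have htle : (2 * t : ℝ) ≤ ε * n := by
    have h1 : (t : ℝ) ≤ ε * n / 2 := Nat.floor_le (by positivity)
    linarith
  -- the collection of matchings of good pairs
  set Ps : Finset (Finset (ℕ × ℕ)) :=
    (Finset.range n ×ˢ Finset.range n).powerset.filter (fun P =>
      (∀ p ∈ P, p.1 < p.2 ∧ p.2 < n ∧ f p.2 < f p.1 ∧ ((p.2 : ℝ) - p.1) ≤ ε * n) ∧
      (∀ p ∈ P, ∀ q ∈ P, p ≠ q → ({p.1, p.2} : Set ℕ) ∩ {q.1, q.2} = ∅)) with hPs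
  have hempty : (∅ : Finset (ℕ × ℕ)) ∈ Ps := by
    simp [hPs]
  obtain ⟨P, hP, hmax⟩ := Ps.exists_max_image (fun P => P.card) ⟨∅, hempty⟩
  rw [hPs, Finset.mem_filter, Finset.mem_powerset] at hP
  obtain ⟨hPsub, hPgood, hPdisj⟩ := hP
  -- main claim : P has at least t elements
  have hcard : t ≤ P.card := by
    by_contra hk
    push_neg at hk
    have hk' : P.card ≤ t - 1 := by omega
    have ht1 : 1 ≤ t := by omega
    -- the set of touched points
    set S : Finset ℕ := P.biUnion (fun p => {p.1, p.2}) with hS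
    have hcardS : S.card ≤ 2 * P.card := by
      calc S.card ≤ ∑ p ∈ P, ({p.1, p.2} : Finset ℕ).card := Finset.card_biUnion_le
        _ ≤ ∑ p ∈ P, 2 := by
            refine Finset.sum_le_sum fun p _ => ?_
            exact (Finset.card_insert_le _ _).trans (by simp)
        _ = 2 * P.card := by rw [Finset.sum_const, smul_eq_mul, mul_comm]
    have hcardSR : (S.card : ℝ) ≤ ε * n - 2 := by
      have h0 : (S.card : ℝ) ≤ 2 * P.card := by exact_mod_cast hcardS
      have h2 : ((P.card : ℝ) + 1) ≤ t := by exact_mod_cast hk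
      linarith
    set C : Finset ℕ := Finset.range n \ S with hC
    -- f is monotone on C
    have hmonoC : ∀ x ∈ C, ∀ y ∈ C, x ≤ y → f x ≤ f y := by
      intro x hx y hy hxy
      by_contra hfxy
      push_neg at hfxy
      have hxy' : x < y := by
        rcases lt_or_eq_of_le hxy with h | h
        · exact h
        · subst h; exact absurd hfxy (lt_irrefl _)
      obtain ⟨a, b, haC, hbC, hab, hfab, hby, hconsec⟩ :=
        stmt6_consec f C (y - x) x y le_rfl hx hy hxy' hfxy
      have haR : a ∈ Finset.range n := (Finset.mem_sdiff.mp haC).1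
      have hbR : b ∈ Finset.range n := (Finset.mem_sdiff.mp hbC).1
      have haS : a ∉ S := (Finset.mem_sdiff.mp haC).2
      have hbS : b ∉ S := (Finset.mem_sdiff.mp hbC).2
      have hbn : b < n := Finset.mem_range.mp hbR
      by_cases hgap : ((b : ℝ) - a) ≤ ε * n
      · -- we can enlarge the matching: contradiction with maximality
        have habP : (a, b) ∉ P := by
          intro hmem
          exact haS (Finset.mem_biUnion.mpr ⟨(a, b), hmem, by simp⟩)
        have hdisjnew : ∀ p ∈ P, ({a, b} : Set ℕ) ∩ {p.1, p.2} = ∅ := by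
          intro p hp
          have h1 : p.1 ∈ S := Finset.mem_biUnion.mpr ⟨p, hp, by simp⟩
          have h2 : p.2 ∈ S := Finset.mem_biUnion.mpr ⟨p, hp, by simp⟩
          ext z
          simp only [Set.mem_inter_iff, Set.mem_insert_iff, Set.mem_singleton_iff,
            Set.mem_empty_iff_false, iff_false]
          rintro ⟨(rfl | rfl), (h | h)⟩ <;> subst h <;> first | exact haS h1 | exact haS h2 | exact hbS h1 | exact hbS h2
        have hQ : insert (a, b) P ∈ Ps := by
          rw [hPs, Finset.mem_filter, Finset.mem_powerset]
          refine ⟨?_, ?_, ?_⟩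
          · intro q hq
            rcases Finset.mem_insert.mp hq with rfl | hq
            · exact Finset.mem_product.mpr ⟨Finset.mem_range.mpr (by omega), hbR⟩
            · exact hPsub hq
          · intro q hq
            rcases Finset.mem_insert.mp hq with rfl | hq
            · exact ⟨hab, hbn, hfab, hgap⟩
            · exact hPgood q hq
          · intro p hp q hq hpq
            rcases Finset.mem_insert.mp hp with rfl | hp <;>
              rcases Finset.mem_insert.mp hq with rfl | hq
            · exact absurd rfl hpq
            · exact hdisjnew q hq
            · rw [Set.inter_comm]; exact hdisjnew p hp
            · exact hPdisj p hp q hq hpq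
        have := hmax _ hQ
        simp only [Finset.card_insert_of_notMem habP] at this
        omega
      · -- the gap is big : too many points of S between a and b
        push_neg at hgap
        have hIoo : Finset.Ioo a b ⊆ S := by
          intro c hc
          rw [Finset.mem_Ioo] at hc
          have hcR : c ∈ Finset.range n := Finset.mem_range.mpr (by omega)
          by_contra hcS
          exact hconsec c (Finset.mem_sdiff.mpr ⟨hcR, hcS⟩) ⟨hc.1, hc.2⟩
        have h1 : b - a - 1 ≤ S.card := by
          calc b - a - 1 = (Finset.Ioo a b).card := by rw [Nat.card_Ioo]
            _ ≤ S.card := Finset.card_le_card hIoo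
        have h2 : ((b : ℝ) - a - 1) ≤ (S.card : ℝ) := by
          have hle : ((b - a - 1 : ℕ) : ℝ) ≤ (S.card : ℝ) := by exact_mod_cast h1
          have heq : b - a - 1 + (a + 1) = b := by omega
          have heq' : ((b - a - 1 : ℕ) : ℝ) + ((a : ℝ) + 1) = (b : ℝ) := by
            exact_mod_cast heq
          linarith
        linarith
    -- extend f from C to a monotone function g
    set g : ℕ → ℕ := fun x =>
      if h : ((C.filter (fun c => c ≤ x)).Nonempty) then
        f ((C.filter (fun c => c ≤ x)).max' h) else 0 with hg
    have hgmono : ∀ x y, x ≤ y → y < n → g x ≤ g y := by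
      intro x y hxy _
      simp only [hg]
      split_ifs with h1 h2 h2
      · set a := (C.filter (fun c => c ≤ x)).max' h1 with ha
        set b := (C.filter (fun c => c ≤ y)).max' h2 with hb
        have haf : a ∈ C.filter (fun c => c ≤ x) := Finset.max'_mem _ _
        have hbf : b ∈ C.filter (fun c => c ≤ y) := Finset.max'_mem _ _
        have haC : a ∈ C := (Finset.mem_filter.mp haf).1
        have hbC : b ∈ C := (Finset.mem_filter.mp hbf).1
        have hax : a ≤ x := (Finset.mem_filter.mp haf).2
        have hay : a ∈ C.filter (fun c => c ≤ y) :=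
          Finset.mem_filter.mpr ⟨haC, hax.trans hxy⟩
        have hab : a ≤ b := Finset.le_max' _ _ hay
        exact hmonoC a haC b hbC hab
      · exfalso
        obtain ⟨c, hc⟩ := h1
        rw [Finset.mem_filter] at hc
        exact h2 ⟨c, Finset.mem_filter.mpr ⟨hc.1, hc.2.trans hxy⟩⟩
      · exact Nat.zero_le _
      · exact le_rfl
    have hagree : ∀ c ∈ C, g c = f c := by
      intro c hc
      have hcf : c ∈ C.filter (fun d => d ≤ c) := Finset.mem_filter.mpr ⟨hc, le_rfl⟩
      have hne : (C.filter (fun d => d ≤ c)).Nonempty := ⟨c, hcf⟩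
      simp only [hg, dif_pos hne]
      congr 1
      refine le_antisymm (Finset.max'_le _ _ _ fun d hd => (Finset.mem_filter.mp hd).2)
        (Finset.le_max' _ _ hcf)
    have hsub : (Finset.range n).filter (fun x => f x ≠ g x) ⊆ S := by
      intro x hx
      rw [Finset.mem_filter] at hx
      by_contra hxS
      exact hx.2 (hagree x (Finset.mem_sdiff.mpr ⟨hx.1, hxS⟩)).symm
    have hfar' := hfar g hgmono
    have : (((Finset.range n).filter (fun x => f x ≠ g x)).card : ℝ) ≤ (S.card : ℝ) := by
      exact_mod_cast Finset.card_le_card hsub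
    linarith
  obtain ⟨Q, hQsub, hQcard⟩ := Finset.exists_subset_card_eq hcard
  exact ⟨Q, hQcard, fun p hp => hPgood p (hQsub hp),
    fun p hp q hq hpq => hPdisj p (hQsub hp) q (hQsub hq) hpq⟩
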